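/- Define for a string e over {f, g, h, ħ} the pair (n_s(e), n_c(e)) of positive integers by n_s(∅) = n_c(∅) = 4 and the recursions n_s(f·e) = n_s(e) + 2n_c(e), n_c(f·e) = n_c(e); n_s(g·e) = n_s(e), n_c(g·e) = 2n_s(e) + n_c(e); n_s(h·e) = 3n_s(e) + 2n_c(e), n_c(h·e) = 2n_s(e) + n_c(e); n_s(ħ·e) = n_s(e) + 2n_c(e), n_c(ħ·e) = 2n_s(e) + 3n_c(e). Then for all e, n_s(e) ≥ 4 and n_c(e) ≥ 4, and for any nonempty string e₀·e the leading character e₀ is determined by the pair (a, b) = (n_s(e₀·e), n_c(e₀·e)): e₀ = f iff a > 2b, e₀ = g iff 2a < b, e₀ = h iff b < a < 2b, and e₀ = ħ iff a < b < 2a. -/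
import Mathlib


/-- The four-character alphabet `{f, g, h, ħ}`. -/
inductive Ch
  | f | g | h | hb
deriving DecidableEq

/-- The pair `(n_s(e), n_c(e))` counting occurrences of `+ₛ` and `+꜀` in the
signature of the fundamental direction cycle of descent `e`. -/
def nsc : List Ch → ℕ × ℕ
  | [] => (4, 4)
  | c :: e =>
    let a := (nsc e).1
    let b := (nsc e).2
    match c with
    | .f => (a + 2 * b, b)
    | .g => (a, 2 * a + b)
    | .h => (3 * a + 2 * b, 2 * a + b)
    | .hb => (a + 2 * b, 2 * a + 3 * b)

theorem nsc_bounds_and_leading_character :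
    (∀ e : List Ch, 4 ≤ (nsc e).1 ∧ 4 ≤ (nsc e).2) ∧
    (∀ (e₀ : Ch) (e : List Ch),
      (e₀ = Ch.f ↔ (nsc (e₀ :: e)).1 > 2 * (nsc (e₀ :: e)).2) ∧
      (e₀ = Ch.g ↔ 2 * (nsc (e₀ :: e)).1 < (nsc (e₀ :: e)).2) ∧
      (e₀ = Ch.h ↔
        (nsc (e₀ :: e)).2 < (nsc (e₀ :: e)).1 ∧ (nsc (e₀ :: e)).1 < 2 * (nsc (e₀ :: e)).2) ∧
      (e₀ = Ch.hb ↔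
        (nsc (e₀ :: e)).1 < (nsc (e₀ :: e)).2 ∧ (nsc (e₀ :: e)).2 < 2 * (nsc (e₀ :: e)).1)) := by
  have key : ∀ e : List Ch, 4 ≤ (nsc e).1 ∧ 4 ≤ (nsc e).2 := by
    intro e
    induction e with
    | nil => simp [nsc]
    | cons c e ih => cases c <;> simp [nsc] <;> omega
  refine ⟨key, fun e₀ e => ?_⟩
  obtain ⟨ha, hb⟩ := key e
  cases e₀ <;> simp [nsc] <;> omega
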